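/- For n ≥ 4 and distinct indices i, j ≤ d < k < m ≤ n, the identity R_{ij}L_{ij}⁻¹ = R_{ki}⁻¹ L_{mj} L_{mi}⁻¹ L_{mj}⁻¹ R_{ij} R_{ki} R_{kj}⁻¹ L_{ij}⁻¹ L_{mi} holds in Aut(Fₙ). -/

import Mathlib

private lemma aux_fix {G : Type*} [Group G] (e : MulAut G) (c : G) (h : e c = c) :
    e⁻¹ c = c := by
  rw [MulAut.inv_def, MulEquiv.symm_apply_eq, h]

private lemma aux_invR {G : Type*} [Group G] (e : MulAut G) (a b : G)
    (ha : e a = a * b) (hb : e b = b) : e⁻¹ a = a * b⁻¹ := by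
  rw [MulAut.inv_def, MulEquiv.symm_apply_eq, map_mul, map_inv, ha, hb]
  group

private lemma aux_invL {G : Type*} [Group G] (e : MulAut G) (a b : G)
    (ha : e a = b * a) (hb : e b = b) : e⁻¹ a = b⁻¹ * a := by
  rw [MulAut.inv_def, MulEquiv.symm_apply_eq, map_mul, map_inv, ha, hb]
  group

/-- For `n ≥ 4` and distinct indices `i, j ≤ d < k < m ≤ n` (0-indexed:
`i, j < d ≤ k < m < n`), the identity
`R_{ij} L_{ij}⁻¹ = R_{ki}⁻¹ L_{mj} L_{mi}⁻¹ L_{mj}⁻¹ R_{ij} R_{ki} R_{kj}⁻¹ L_{ij}⁻¹ L_{mi}`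
holds in `Aut(Fₙ)`, where `R a b : x_a ↦ x_a x_b` and `L a b : x_a ↦ x_b x_a` are the
Nielsen automorphisms fixing the other generators. -/
theorem stmt_7 (n : ℕ) (hn : 4 ≤ n) (d : ℕ)
    (R L : Fin n → Fin n → MulAut (FreeGroup (Fin n)))
    (hR : ∀ a b : Fin n, a ≠ b →
      (R a b) (FreeGroup.of a) = FreeGroup.of a * FreeGroup.of b ∧
      ∀ c : Fin n, c ≠ a → (R a b) (FreeGroup.of c) = FreeGroup.of c)
    (hL : ∀ a b : Fin n, a ≠ b →
      (L a b) (FreeGroup.of a) = FreeGroup.of b * FreeGroup.of a ∧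
      ∀ c : Fin n, c ≠ a → (L a b) (FreeGroup.of c) = FreeGroup.of c)
    (i j k m : Fin n) (hij : i ≠ j)
    (hid : (i : ℕ) < d) (hjd : (j : ℕ) < d)
    (hdk : d ≤ (k : ℕ)) (hkm : (k : ℕ) < (m : ℕ)) :
    R i j * (L i j)⁻¹ =
      (R k i)⁻¹ * L m j * (L m i)⁻¹ * (L m j)⁻¹ * R i j * R k i * (R k j)⁻¹ *
        (L i j)⁻¹ * L m i := by
  have hji : j ≠ i := hij.symm
  have hik : i ≠ k := Fin.ne_of_val_ne (by omega)
  have hki : k ≠ i := hik.symm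
  have hjk : j ≠ k := Fin.ne_of_val_ne (by omega)
  have hkj : k ≠ j := hjk.symm
  have him : i ≠ m := Fin.ne_of_val_ne (by omega)
  have hmi : m ≠ i := him.symm
  have hjm : j ≠ m := Fin.ne_of_val_ne (by omega)
  have hmj : m ≠ j := hjm.symm
  have hkm' : k ≠ m := Fin.ne_of_val_ne (by omega)
  have hmk : m ≠ k := hkm'.symm
  -- inverse action lemmas
  have fixR : ∀ a b : Fin n, a ≠ b → ∀ c : Fin n, c ≠ a →
      (R a b)⁻¹ (FreeGroup.of c) = FreeGroup.of c :=
    fun a b hab c hc => aux_fix _ _ ((hR a b hab).2 c hc)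
  have fixL : ∀ a b : Fin n, a ≠ b → ∀ c : Fin n, c ≠ a →
      (L a b)⁻¹ (FreeGroup.of c) = FreeGroup.of c :=
    fun a b hab c hc => aux_fix _ _ ((hL a b hab).2 c hc)
  have invR : ∀ a b : Fin n, a ≠ b →
      (R a b)⁻¹ (FreeGroup.of a) = FreeGroup.of a * (FreeGroup.of b)⁻¹ :=
    fun a b hab => aux_invR _ _ _ (hR a b hab).1 ((hR a b hab).2 b hab.symm)
  have invL : ∀ a b : Fin n, a ≠ b →
      (L a b)⁻¹ (FreeGroup.of a) = (FreeGroup.of b)⁻¹ * FreeGroup.of a :=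
    fun a b hab => aux_invL _ _ _ (hL a b hab).1 ((hL a b hab).2 b hab.symm)
  apply MulEquiv.toMonoidHom_injective
  apply FreeGroup.ext_hom
  intro c
  simp only [MulEquiv.coe_toMonoidHom, MulAut.mul_apply]
  rcases eq_or_ne c i with hc | hci
  · rw [hc]
    simp only [map_mul, map_inv,
      (hR i j hij).1, (hR i j hij).2, (hL i j hij).1, (hL i j hij).2,
      (hR k i hki).1, (hR k i hki).2, (hR k j hkj).1, (hR k j hkj).2,
      (hL m i hmi).1, (hL m i hmi).2, (hL m j hmj).1, (hL m j hmj).2,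
      fixR i j hij, fixL i j hij, fixR k i hki, fixR k j hkj,
      fixL m i hmi, fixL m j hmj,
      invR i j hij, invL i j hij, invR k i hki, invR k j hkj,
      invL m i hmi, invL m j hmj,
      hji, hik, hki, hjk, hkj, him, hmi, hjm, hmj, hkm', hmk, hij,
      ne_eq, not_false_eq_true]
  · rcases eq_or_ne c j with hc | hcj
    · rw [hc]
      simp only [map_mul, map_inv,
        (hR i j hij).1, (hR i j hij).2, (hL i j hij).1, (hL i j hij).2,
        (hR k i hki).1, (hR k i hki).2, (hR k j hkj).1, (hR k j hkj).2,
        (hL m i hmi).1, (hL m i hmi).2, (hL m j hmj).1, (hL m j hmj).2,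
        fixR i j hij, fixL i j hij, fixR k i hki, fixR k j hkj,
        fixL m i hmi, fixL m j hmj,
        invR i j hij, invL i j hij, invR k i hki, invR k j hkj,
        invL m i hmi, invL m j hmj,
        hji, hik, hki, hjk, hkj, him, hmi, hjm, hmj, hkm', hmk, hij,
        ne_eq, not_false_eq_true]
    · rcases eq_or_ne c k with hc | hck
      · rw [hc]
        simp only [map_mul, map_inv,
          (hR i j hij).1, (hR i j hij).2, (hL i j hij).1, (hL i j hij).2,
          (hR k i hki).1, (hR k i hki).2, (hR k j hkj).1, (hR k j hkj).2,
          (hL m i hmi).1, (hL m i hmi).2, (hL m j hmj).1, (hL m j hmj).2,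
          fixR i j hij, fixL i j hij, fixR k i hki, fixR k j hkj,
          fixL m i hmi, fixL m j hmj,
          invR i j hij, invL i j hij, invR k i hki, invR k j hkj,
          invL m i hmi, invL m j hmj,
          hji, hik, hki, hjk, hkj, him, hmi, hjm, hmj, hkm', hmk, hij,
          ne_eq, not_false_eq_true]
        group
      · rcases eq_or_ne c m with hc | hcm
        · rw [hc]
          simp only [map_mul, map_inv,
            (hR i j hij).1, (hR i j hij).2, (hL i j hij).1, (hL i j hij).2,
            (hR k i hki).1, (hR k i hki).2, (hR k j hkj).1, (hR k j hkj).2,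
            (hL m i hmi).1, (hL m i hmi).2, (hL m j hmj).1, (hL m j hmj).2,
            fixR i j hij, fixL i j hij, fixR k i hki, fixR k j hkj,
            fixL m i hmi, fixL m j hmj,
            invR i j hij, invL i j hij, invR k i hki, invR k j hkj,
            invL m i hmi, invL m j hmj,
            hji, hik, hki, hjk, hkj, him, hmi, hjm, hmj, hkm', hmk, hij,
            ne_eq, not_false_eq_true]
          group
        · simp only [map_mul, map_inv,
            (hR i j hij).2 c hci, (hL i j hij).2 c hci,
            (hR k i hki).2 c hck, (hR k j hkj).2 c hck,
            (hL m i hmi).2 c hcm, (hL m j hmj).2 c hcm,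
            fixR i j hij c hci, fixL i j hij c hci,
            fixR k i hki c hck, fixR k j hkj c hck,
            fixL m i hmi c hcm, fixL m j hmj c hcm]
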